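/- arXiv:1504.08079 — 2 statements merged into one kernel-verified Lean document; each statement's English description precedes it below -/
import Mathlib

section
/- If α = inf_{x∈ℝⁿ} f(x) > −∞, then for any GPPA sequence {x^k} and every m ∈ ℕ one has Σ_{k=1}^{m} ‖x^k − x^{k+1}‖² ≤ (2/(t − L))·(f(x¹) − α); in particular the series Σ_k ‖x^k − x^{k+1}‖² converges. -/
open scoped RealInnerProductSpace
open Filter Topology

lemma descent {E : Type*} [NormedAddCommGroup E] [InnerProductSpace ℝ E] [CompleteSpace E]
    (g₂ : E → ℝ) (g₂' : E → E) (L : ℝ) (hL : 0 ≤ L)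
    (hgrad : ∀ z, HasGradientAt g₂ (g₂' z) z)
    (hlip : LipschitzWith L.toNNReal g₂') (a b : E) :
    g₂ b ≤ g₂ a + ⟪g₂' a, b - a⟫ + L / 2 * ‖b - a‖ ^ 2 := by
  set v := b - a with hv
  have hcontg' : Continuous g₂' := hlip.continuous
  have hφ : ∀ s : ℝ, HasDerivAt (fun s : ℝ => g₂ (a + s • v))
      (⟪g₂' (a + s • v), v⟫) s := by
    intro s
    have hline : HasDerivAt (fun s : ℝ => a + s • v) v s := by
      simpa using ((hasDerivAt_id s).smul_const v).const_add a
    have h2 := (hgrad (a + s • v)).hasFDerivAt.comp_hasDerivAt s hline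
    simpa [InnerProductSpace.toDual_apply_apply, Function.comp_def] using h2
  have hcont : Continuous fun s : ℝ => ⟪g₂' (a + s • v), v⟫ := by
    exact (hcontg'.comp (by continuity)).inner continuous_const
  have hint : ∫ s in (0:ℝ)..1, ⟪g₂' (a + s • v), v⟫ = g₂ b - g₂ a := by
    have := intervalIntegral.integral_eq_sub_of_hasDerivAt
      (fun s _ => hφ s) (hcont.intervalIntegrable 0 1)
    simpa [hv] using this
  have hbound : ∀ s ∈ Set.Icc (0:ℝ) 1,
      ⟪g₂' (a + s • v), v⟫ ≤ ⟪g₂' a, v⟫ + L * s * ‖v‖ ^ 2 := by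
    intro s hs
    have h1 : ⟪g₂' (a + s • v) - g₂' a, v⟫ ≤ ‖g₂' (a + s • v) - g₂' a‖ * ‖v‖ :=
      real_inner_le_norm _ _
    have h2 : ‖g₂' (a + s • v) - g₂' a‖ ≤ L * (s * ‖v‖) := by
      have := hlip.dist_le_mul (a + s • v) a
      rw [dist_eq_norm] at this
      calc ‖g₂' (a + s • v) - g₂' a‖ ≤ L.toNNReal * ‖s • v‖ := by
            simpa [dist_eq_norm] using this
        _ = L * (s * ‖v‖) := by
            rw [norm_smul, Real.norm_eq_abs, abs_of_nonneg hs.1,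
              Real.coe_toNNReal _ hL]
    have := h1.trans (by nlinarith [norm_nonneg v] :
      ‖g₂' (a + s • v) - g₂' a‖ * ‖v‖ ≤ L * s * ‖v‖ ^ 2)
    rw [inner_sub_left] at this
    linarith
  have hmono : ∫ s in (0:ℝ)..1, ⟪g₂' (a + s • v), v⟫
      ≤ ∫ s in (0:ℝ)..1, (⟪g₂' a, v⟫ + L * s * ‖v‖ ^ 2) := by
    apply intervalIntegral.integral_mono_on (by norm_num)
      (hcont.intervalIntegrable 0 1)
      ((by continuity : Continuous fun s : ℝ => ⟪g₂' a, v⟫ + L * s * ‖v‖ ^ 2).intervalIntegrable 0 1)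
      hbound
  have hval : ∫ s in (0:ℝ)..1, (⟪g₂' a, v⟫ + L * s * ‖v‖ ^ 2)
      = ⟪g₂' a, v⟫ + L / 2 * ‖v‖ ^ 2 := by
    have h1 : ∀ s : ℝ, ⟪g₂' a, v⟫ + L * s * ‖v‖ ^ 2 = ⟪g₂' a, v⟫ + s * (L * ‖v‖ ^ 2) :=
      fun s => by ring
    simp only [h1]
    rw [intervalIntegral.integral_add intervalIntegrable_const
        ((by continuity : Continuous fun s : ℝ => s * (L * ‖v‖ ^ 2)).intervalIntegrable 0 1),
      intervalIntegral.integral_mul_const, integral_id, intervalIntegral.integral_const]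
    simp
    ring
  rw [hint] at hmono
  rw [hval] at hmono
  linarith

/-- If `α = inf f > −∞`, then for any GPPA sequence and every `m`,
`Σ_{k=1}^{m} ‖x^k − x^{k+1}‖² ≤ (2/(t−L))(f(x¹) − α)`; in particular the series
`Σ_k ‖x^k − x^{k+1}‖²` converges. Here `f = g₁ + g₂ − h`. -/
theorem stmt_3 {n : ℕ}
    (g₁ : EuclideanSpace ℝ (Fin n) → EReal)
    (g₂ h : EuclideanSpace ℝ (Fin n) → ℝ)
    (g₂' : EuclideanSpace ℝ (Fin n) → EuclideanSpace ℝ (Fin n))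
    (L t : ℝ) (hL : 0 ≤ L) (ht : L < t)
    (hproper : ∃ z, g₁ z ≠ ⊤) (hnotbot : ∀ z, g₁ z ≠ ⊥)
    (hlsc : LowerSemicontinuous g₁)
    (hgrad : ∀ z, HasGradientAt g₂ (g₂' z) z)
    (hlip : LipschitzWith L.toNNReal g₂')
    (hconv : ConvexOn ℝ Set.univ h)
    (f : EuclideanSpace ℝ (Fin n) → EReal)
    (hf : ∀ z, f z = g₁ z + ((g₂ z : ℝ) : EReal) - ((h z : ℝ) : EReal))
    (hbdd : (⨅ z, f z) ≠ ⊥)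
    (x y : ℕ → EuclideanSpace ℝ (Fin n))
    (hdom : ∀ k, g₁ (x k) ≠ ⊤)
    (hy : ∀ k z, ⟪y k, z - x k⟫ ≤ h z - h (x k))
    (hmin : ∀ k z,
      g₁ (x (k+1)) - ((⟪y k - g₂' (x k), x (k+1) - x k⟫ : ℝ) : EReal)
        + ((t/2 * ‖x (k+1) - x k‖^2 : ℝ) : EReal)
      ≤ g₁ z - ((⟪y k - g₂' (x k), z - x k⟫ : ℝ) : EReal)
        + ((t/2 * ‖z - x k‖^2 : ℝ) : EReal)) :
    (∀ m : ℕ,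
      ((∑ k ∈ Finset.Icc 1 m, ‖x k - x (k+1)‖^2 : ℝ) : EReal)
        ≤ ((2/(t - L) : ℝ) : EReal) * (f (x 1) - ⨅ z, f z)) ∧
    Summable (fun k => ‖x k - x (k+1)‖^2) := by
  set G : ℕ → ℝ := fun k => (g₁ (x k)).toReal with hG
  have hGcoe : ∀ k, ((G k : ℝ) : EReal) = g₁ (x k) := fun k =>
    EReal.coe_toReal (hdom k) (hnotbot _)
  set F : ℕ → ℝ := fun k => G k + g₂ (x k) - h (x k) with hF
  have hfF : ∀ k, f (x k) = ((F k : ℝ) : EReal) := by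
    intro k
    rw [hf, ← hGcoe k]
    norm_cast
  have hαle : ∀ k, (⨅ z, f z) ≤ ((F k : ℝ) : EReal) := fun k =>
    (iInf_le _ (x k)).trans_eq (hfF k)
  have hαtop : (⨅ z, f z) ≠ ⊤ := fun hc => by
    have := hαle 0; rw [hc] at this
    exact (EReal.coe_lt_top (F 0)).not_ge (by simpa using this)
  set A : ℝ := (⨅ z, f z).toReal with hA
  have hAcoe : ((A : ℝ) : EReal) = ⨅ z, f z := EReal.coe_toReal hαtop hbdd
  have hAF : ∀ k, A ≤ F k := by
    intro k
    have := hαle k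
    rw [← hAcoe] at this
    exact_mod_cast this
  have hstep : ∀ k, F (k+1) + (t - L)/2 * ‖x k - x (k+1)‖^2 ≤ F k := by
    intro k
    have h1 := hmin k (x k)
    simp only [sub_self, inner_zero_right, norm_zero] at h1
    rw [← hGcoe k, ← hGcoe (k+1)] at h1
    have h1' : G (k+1) - ⟪y k - g₂' (x k), x (k+1) - x k⟫
        + t/2 * ‖x (k+1) - x k‖^2 ≤ G k := by
      have : ((G (k+1) - ⟪y k - g₂' (x k), x (k+1) - x k⟫
          + t/2 * ‖x (k+1) - x k‖^2 : ℝ) : EReal) ≤ ((G k : ℝ) : EReal) := by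
        push_cast
        convert h1 using 2 <;> norm_num
      exact_mod_cast this
    have h2 := descent g₂ g₂' L hL hgrad hlip (x k) (x (k+1))
    have h3 := hy k (x (k+1))
    rw [inner_sub_left] at h1'
    have hnrm : ‖x k - x (k+1)‖ = ‖x (k+1) - x k‖ := norm_sub_rev _ _
    simp only [hF, hnrm]
    nlinarith [h1', h2, h3]
  have key : ∀ a b : ℕ, a ≤ b →
      ∑ k ∈ Finset.Ico a b, ‖x k - x (k+1)‖^2 ≤ 2/(t - L) * (F a - A) := by
    intro a b hab
    have hc : (0:ℝ) < (t - L)/2 := by linarith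
    have h1 : ∑ k ∈ Finset.Ico a b, (t - L)/2 * ‖x k - x (k+1)‖^2
        ≤ ∑ k ∈ Finset.Ico a b, (F k - F (k+1)) := by
      apply Finset.sum_le_sum
      intro k _
      have := hstep k
      linarith
    have h2 : ∑ k ∈ Finset.Ico a b, (F k - F (k+1)) = F a - F b := by
      rw [Finset.sum_Ico_eq_sub _ hab, Finset.sum_range_sub' F, Finset.sum_range_sub' F]
      ring
    have h3 : (t - L)/2 * ∑ k ∈ Finset.Ico a b, ‖x k - x (k+1)‖^2 ≤ F a - A := by
      have e : (t - L)/2 * ∑ k ∈ Finset.Ico a b, ‖x k - x (k+1)‖^2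
          = ∑ k ∈ Finset.Ico a b, (t - L)/2 * ‖x k - x (k+1)‖^2 :=
        Finset.mul_sum _ _ _
      rw [e]
      exact (h1.trans_eq h2).trans (by have := hAF b; linarith)
    rw [div_mul_eq_mul_div, le_div_iff₀ (by linarith : (0:ℝ) < t - L)]
    calc (∑ k ∈ Finset.Ico a b, ‖x k - x (k+1)‖^2) * (t - L)
        = 2 * ((t - L)/2 * ∑ k ∈ Finset.Ico a b, ‖x k - x (k+1)‖^2) := by ring
      _ ≤ 2 * (F a - A) := by linarith
  constructor
  · intro m
    rw [hfF 1, ← hAcoe]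
    rw [show ((F 1 : ℝ) : EReal) - ((A : ℝ) : EReal) = ((F 1 - A : ℝ) : EReal) by
      norm_cast]
    rw [← EReal.coe_mul]
    apply EReal.coe_le_coe_iff.mpr
    have : Finset.Icc 1 m = Finset.Ico 1 (m+1) := by
      ext i; simp [Nat.lt_succ_iff]
    rw [this]
    exact key 1 (m+1) (by omega)
  · apply summable_of_sum_range_le (c := 2/(t - L) * (F 0 - A))
    · intro k; positivity
    · intro m
      rw [Finset.range_eq_Ico]
      exact key 0 m (Nat.zero_le m)
end

section
/- Suppose inf_{x∈ℝⁿ} f(x) > −∞. If a GPPA sequence {x^k} has a cluster point x* (i.e., some subsequence x^{k_ℓ} → x*), then lim_{k→+∞} f(x^k) = f(x*). Consequently, f takes the same value at all cluster points of {x^k}. -/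
open scoped RealInnerProductSpace
open Filter Topology

lemma my_descent {E : Type*} [NormedAddCommGroup E] [InnerProductSpace ℝ E] [CompleteSpace E]
    (g : E → ℝ) (g' : E → E) (L : ℝ) (hL : 0 ≤ L)
    (hgrad : ∀ z, HasGradientAt g (g' z) z)
    (hlip : LipschitzWith L.toNNReal g') (a b : E) :
    g b ≤ g a + ⟪g' a, b - a⟫ + L/2 * ‖b - a‖^2 := by
  set v := b - a with hv
  have hline : ∀ s : ℝ, HasDerivAt (fun s : ℝ => g (a + s • v)) ⟪g' (a + s • v), v⟫ s := by
    intro s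
    have h1 : HasDerivAt (fun s : ℝ => a + s • v) v s := by
      simpa using ((hasDerivAt_id s).smul_const v).const_add a
    have h2 := ((hgrad (a + s • v)).hasFDerivAt.comp s h1.hasFDerivAt)
    have := h2.hasDerivAt
    simpa [Function.comp_def] using this
  have hcont : Continuous fun s : ℝ => (⟪g' (a + s • v), v⟫ : ℝ) := by
    apply Continuous.inner
    · exact hlip.continuous.comp (by continuity)
    · exact continuous_const
  have hint : ∫ s in (0:ℝ)..1, ⟪g' (a + s • v), v⟫ = g b - g a := by
    have := intervalIntegral.integral_eq_sub_of_hasDerivAt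
      (f := fun s : ℝ => g (a + s • v)) (f' := fun s : ℝ => ⟪g' (a + s • v), v⟫)
      (a := 0) (b := 1) (fun s _ => hline s) (hcont.intervalIntegrable 0 1)
    simpa [hv] using this
  have hmono : ∫ s in (0:ℝ)..1, ⟪g' (a + s • v), v⟫
      ≤ ∫ s in (0:ℝ)..1, (⟪g' a, v⟫ + L * ‖v‖^2 * s) := by
    apply intervalIntegral.integral_mono_on (by norm_num)
      (hcont.intervalIntegrable 0 1) (by apply Continuous.intervalIntegrable; continuity)
    intro s hs
    have h1 : ⟪g' (a + s • v), v⟫ - ⟪g' a, v⟫ = ⟪g' (a + s • v) - g' a, v⟫ := by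
      rw [inner_sub_left]
    have h2 : ⟪g' (a + s • v) - g' a, v⟫ ≤ ‖g' (a + s • v) - g' a‖ * ‖v‖ :=
      real_inner_le_norm _ _
    have h3 : ‖g' (a + s • v) - g' a‖ ≤ L * (s * ‖v‖) := by
      have := hlip.dist_le_mul (a + s • v) a
      simp only [dist_eq_norm] at this
      calc ‖g' (a + s • v) - g' a‖ ≤ L.toNNReal * ‖a + s • v - a‖ := this
        _ = L * ‖s • v‖ := by rw [Real.coe_toNNReal L hL]; simp
        _ = L * (s * ‖v‖) := by
            rw [norm_smul, Real.norm_eq_abs, abs_of_nonneg hs.1]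
    have h4 : ‖g' (a + s • v) - g' a‖ * ‖v‖ ≤ L * (s * ‖v‖) * ‖v‖ := by
      gcongr
    nlinarith [norm_nonneg v]
  have hcalc : ∫ s in (0:ℝ)..1, (⟪g' a, v⟫ + L * ‖v‖^2 * s)
      = ⟪g' a, v⟫ + L/2 * ‖v‖^2 := by
    rw [intervalIntegral.integral_add (by apply Continuous.intervalIntegrable; continuity)
      (by apply Continuous.intervalIntegrable; continuity)]
    rw [intervalIntegral.integral_const_mul, integral_id]
    simp; ring
  linarith [hint ▸ hmono, hcalc ▸ hmono]

lemma gppa_tendsto {n : ℕ}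
    (g₁ : EuclideanSpace ℝ (Fin n) → EReal)
    (g₂ h : EuclideanSpace ℝ (Fin n) → ℝ)
    (g₂' : EuclideanSpace ℝ (Fin n) → EuclideanSpace ℝ (Fin n))
    (L t : ℝ) (hL : 0 ≤ L) (ht : L < t)
    (hnotbot : ∀ z, g₁ z ≠ ⊥)
    (hlsc : LowerSemicontinuous g₁)
    (hgrad : ∀ z, HasGradientAt g₂ (g₂' z) z)
    (hlip : LipschitzWith L.toNNReal g₂')
    (hconv : ConvexOn ℝ Set.univ h)
    (f : EuclideanSpace ℝ (Fin n) → EReal)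
    (hf : ∀ z, f z = g₁ z + ((g₂ z : ℝ) : EReal) - ((h z : ℝ) : EReal))
    (hbdd : (⨅ z, f z) ≠ ⊥)
    (x y : ℕ → EuclideanSpace ℝ (Fin n))
    (hdom : ∀ k, g₁ (x k) ≠ ⊤)
    (hy : ∀ k z, ⟪y k, z - x k⟫ ≤ h z - h (x k))
    (hmin : ∀ k z,
      g₁ (x (k+1)) - ((⟪y k - g₂' (x k), x (k+1) - x k⟫ : ℝ) : EReal)
        + ((t/2 * ‖x (k+1) - x k‖^2 : ℝ) : EReal)
      ≤ g₁ z - ((⟪y k - g₂' (x k), z - x k⟫ : ℝ) : EReal)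
        + ((t/2 * ‖z - x k‖^2 : ℝ) : EReal))
    (xstar : EuclideanSpace ℝ (Fin n))
    (hcluster : ∃ φ : ℕ → ℕ, StrictMono φ ∧ Tendsto (fun l => x (φ l)) atTop (𝓝 xstar)) :
    Tendsto (fun k => f (x k)) atTop (𝓝 (f xstar)) := by
  obtain ⟨φ, hφ, hxφ⟩ := hcluster
  have hφt : Tendsto φ atTop atTop := tendsto_atTop_mono hφ.id_le tendsto_id
  set a : ℕ → ℝ := fun k => (g₁ (x k)).toReal with ha
  have hcoe : ∀ k, g₁ (x k) = ((a k : ℝ) : EReal) :=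
    fun k => (EReal.coe_toReal (hdom k) (hnotbot _)).symm
  set r : ℕ → ℝ := fun k => a k + g₂ (x k) - h (x k) with hr
  have hfr : ∀ k, f (x k) = ((r k : ℝ) : EReal) := by
    intro k
    rw [hf, hcoe, ← EReal.coe_add, ← EReal.coe_sub]
  clear_value a r
  -- real version of hmin
  have hminR : ∀ (k : ℕ) (z : EuclideanSpace ℝ (Fin n)) (az : ℝ), g₁ z = ((az : ℝ) : EReal) →
      a (k+1) - ⟪y k - g₂' (x k), x (k+1) - x k⟫ + t/2 * ‖x (k+1) - x k‖^2
      ≤ az - ⟪y k - g₂' (x k), z - x k⟫ + t/2 * ‖z - x k‖^2 := by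
    intro k z az hz
    have hm := hmin k z
    rw [hcoe, hz, ← EReal.coe_sub, ← EReal.coe_add, ← EReal.coe_sub, ← EReal.coe_add,
      EReal.coe_le_coe_iff] at hm
    exact hm
  -- descent
  have hdesc : ∀ k, r (k+1) + (t-L)/2 * ‖x (k+1) - x k‖^2 ≤ r k := by
    intro k
    have hm := hminR k (x k) (a k) (hcoe k)
    simp only [sub_self, inner_zero_right, norm_zero] at hm
    have hg := my_descent g₂ g₂' L hL hgrad hlip (x k) (x (k+1))
    have hh := hy k (x (k+1))
    have hin : ⟪y k - g₂' (x k), x (k+1) - x k⟫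
        = ⟪y k, x (k+1) - x k⟫ - ⟪g₂' (x k), x (k+1) - x k⟫ := inner_sub_left _ _ _
    simp only [hr]
    nlinarith [hm, hg, hh, hin]
  have hant : Antitone r := antitone_nat_of_succ_le (by
    intro k
    have h1 := hdesc k
    have h2 : 0 ≤ (t-L)/2 * ‖x (k+1) - x k‖^2 := mul_nonneg (by linarith) (sq_nonneg _)
    exact le_trans (le_add_of_nonneg_right h2) h1)
  -- lower bound
  have hBlt : (⨅ z, f z) < ⊤ := lt_of_le_of_lt (iInf_le _ (x 0)) (by rw [hfr]; exact EReal.coe_lt_top _)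
  have hBcoe : (((⨅ z, f z).toReal : ℝ) : EReal) = ⨅ z, f z := EReal.coe_toReal hBlt.ne hbdd
  have hlb : ∀ k, (⨅ z, f z).toReal ≤ r k := by
    intro k
    have : (⨅ z, f z) ≤ f (x k) := iInf_le _ _
    rw [hfr, ← hBcoe, EReal.coe_le_coe_iff] at this
    exact this
  have hbdd' : BddBelow (Set.range r) := ⟨_, fun v ⟨k, hk⟩ => hk ▸ hlb k⟩
  obtain ⟨m, hrm⟩ : ∃ m : ℝ, Tendsto r atTop (𝓝 m) := ⟨_, tendsto_atTop_ciInf hant hbdd'⟩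
  -- ‖Δ‖ → 0
  have hsq : Tendsto (fun k => ‖x (k+1) - x k‖^2) atTop (𝓝 0) := by
    have h1 : Tendsto (fun k => r k - r (k+1)) atTop (𝓝 0) := by
      have := hrm.sub (hrm.comp (tendsto_add_atTop_nat 1))
      simpa using this
    apply squeeze_zero (fun k => sq_nonneg _) (g := fun k => 2/(t-L) * (r k - r (k+1)))
    · intro k
      have htl : (0:ℝ) < t - L := by linarith
      rw [div_mul_eq_mul_div, le_div_iff₀ htl]
      have h5 := hdesc k
      linarith
    · simpa using h1.const_mul (2/(t-L))
  have hΔn : Tendsto (fun k => ‖x (k+1) - x k‖) atTop (𝓝 0) := by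
    have heq : (fun k => ‖x (k+1) - x k‖) = fun k => Real.sqrt (‖x (k+1) - x k‖^2) :=
      funext fun k => (Real.sqrt_sq (norm_nonneg _)).symm
    rw [heq]
    have h2 := (Real.continuous_sqrt.tendsto 0).comp hsq
    simp only [Function.comp_def, Real.sqrt_zero] at h2
    exact h2
  have hΔv : Tendsto (fun k => x (k+1) - x k) atTop (𝓝 0) :=
    tendsto_zero_iff_norm_tendsto_zero.mpr hΔn
  have hx1 : Tendsto (fun l => x (φ l + 1)) atTop (𝓝 xstar) := by
    have := (hΔv.comp hφt).add hxφ
    simp only [Function.comp] at this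
    convert this using 2 with l
    · abel
    · simp
  -- continuity
  have hhcont : Continuous h := hconv.locallyLipschitz.continuous
  have hg₂cont : Continuous g₂ := continuous_iff_continuousAt.mpr fun z => (hgrad z).continuousAt
  have hg₂'cont : Continuous g₂' := hlip.continuous
  -- a in terms of r
  have haeq : ∀ k, a k = r k + h (x k) - g₂ (x k) := fun k => by simp only [hr]; ring
  have halφ : Tendsto (fun l => a (φ l)) atTop (𝓝 (m + h xstar - g₂ xstar)) := by
    simp only [haeq]
    exact ((hrm.comp hφt).add ((hhcont.tendsto xstar).comp hxφ)).sub
      ((hg₂cont.tendsto xstar).comp hxφ)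
  have hψt : Tendsto (fun l => φ l + 1) atTop atTop :=
    tendsto_atTop_mono (fun l => (hφ.id_le l).trans (Nat.le_succ _)) tendsto_id
  have halψ : Tendsto (fun l => a (φ l + 1)) atTop (𝓝 (m + h xstar - g₂ xstar)) := by
    simp only [haeq]
    exact ((hrm.comp hψt).add ((hhcont.tendsto xstar).comp hx1)).sub
      ((hg₂cont.tendsto xstar).comp hx1)
  -- lsc: g₁ xstar ≤ coe (m + h xstar - g₂ xstar)
  have hlsc_le : g₁ xstar ≤ ((m + h xstar - g₂ xstar : ℝ) : EReal) := by
    apply le_of_forall_lt_imp_le_of_dense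
    intro c hc
    have hev : ∀ᶠ l in atTop, c < g₁ (x (φ l)) := hxφ.eventually (hlsc xstar c hc)
    refine ge_of_tendsto ?_ (hev.mono fun l hl => hl.le)
    have : Tendsto (fun l => ((a (φ l) : ℝ) : EReal)) atTop
        (𝓝 ((m + h xstar - g₂ xstar : ℝ) : EReal)) :=
      (continuous_coe_real_ereal.tendsto _).comp halφ
    simpa only [← hcoe] using this
  have hstar_top : g₁ xstar ≠ ⊤ :=
    ne_top_of_le_ne_top (EReal.coe_ne_top _) hlsc_le
  obtain ⟨astar, hstarcoe⟩ : ∃ c : ℝ, g₁ xstar = ((c : ℝ) : EReal) :=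
    ⟨_, (EReal.coe_toReal hstar_top (hnotbot _)).symm⟩
  have hlower : astar ≤ m + h xstar - g₂ xstar := by
    rw [hstarcoe, EReal.coe_le_coe_iff] at hlsc_le; exact hlsc_le
  -- bound on subgradients
  obtain ⟨C, hC⟩ := (isCompact_closedBall xstar 2).exists_bound_of_continuousOn
    hhcont.continuousOn
  have hC0 : 0 ≤ C := le_trans (norm_nonneg _) (hC xstar (by simp [Metric.mem_closedBall]))
  have hyb : ∀ k, x k ∈ Metric.ball xstar 1 → ‖y k‖ ≤ 2*C := by
    intro k hk
    rcases eq_or_ne (y k) 0 with h0 | h0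
    · simp [h0]; linarith
    · have hnorm : 0 < ‖y k‖ := norm_pos_iff.mpr h0
      have hz := hy k (x k + ‖y k‖⁻¹ • y k)
      have hinner : ⟪y k, (x k + ‖y k‖⁻¹ • y k) - x k⟫ = ‖y k‖ := by
        simp only [add_sub_cancel_left, real_inner_smul_right, real_inner_self_eq_norm_sq]
        field_simp
      rw [hinner] at hz
      have hmem1 : x k ∈ Metric.closedBall xstar 2 := by
        have := Metric.mem_ball.mp hk
        exact Metric.mem_closedBall.mpr (by linarith)
      have hmem2 : x k + ‖y k‖⁻¹ • y k ∈ Metric.closedBall xstar 2 := by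
        rw [Metric.mem_closedBall]
        have h1 : dist (x k + ‖y k‖⁻¹ • y k) (x k) = 1 := by
          rw [dist_eq_norm, add_sub_cancel_left, norm_smul]
          simp [abs_of_nonneg (inv_nonneg.mpr hnorm.le), inv_mul_cancel₀ hnorm.ne']
        calc dist (x k + ‖y k‖⁻¹ • y k) xstar
            ≤ dist (x k + ‖y k‖⁻¹ • y k) (x k) + dist (x k) xstar := dist_triangle _ _ _
          _ ≤ 1 + 1 := by
              rw [h1]; linarith [(Metric.mem_ball.mp hk).le]
          _ ≤ 2 := by norm_num
      have hb1 : h (x k + ‖y k‖⁻¹ • y k) ≤ C :=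
        le_trans (le_abs_self _) (hC _ hmem2)
      have hb2 : -C ≤ h (x k) := by
        have := hC _ hmem1
        rw [Real.norm_eq_abs, abs_le] at this
        exact this.1
      linarith
  -- inner product term → 0
  set K : ℝ := 2*C + (‖g₂' xstar‖ + L) with hK
  clear_value K
  have hwb : ∀ᶠ l in atTop, ‖y (φ l) - g₂' (x (φ l))‖ ≤ K := by
    filter_upwards [hxφ.eventually (Metric.ball_mem_nhds xstar one_pos)] with l hl
    have h1 : ‖y (φ l)‖ ≤ 2*C := hyb _ hl
    have h2 : ‖g₂' (x (φ l))‖ ≤ ‖g₂' xstar‖ + L := by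
      have := hlip.dist_le_mul (x (φ l)) xstar
      rw [Real.coe_toNNReal L hL] at this
      have hd : dist (x (φ l)) xstar ≤ 1 := (Metric.mem_ball.mp hl).le
      calc ‖g₂' (x (φ l))‖ ≤ ‖g₂' xstar‖ + dist (g₂' (x (φ l))) (g₂' xstar) := by
            rw [dist_eq_norm]
            have := norm_sub_norm_le (g₂' (x (φ l))) (g₂' xstar)
            linarith [norm_sub_norm_le (g₂' (x (φ l))) (g₂' xstar),
              le_abs_self (‖g₂' (x (φ l))‖ - ‖g₂' xstar‖)]
        _ ≤ ‖g₂' xstar‖ + L * dist (x (φ l)) xstar := by linarith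
        _ ≤ ‖g₂' xstar‖ + L := by nlinarith
    calc ‖y (φ l) - g₂' (x (φ l))‖ ≤ ‖y (φ l)‖ + ‖g₂' (x (φ l))‖ := norm_sub_le _ _
      _ ≤ K := by rw [hK]; linarith
  have hdist1 : Tendsto (fun l => ‖x (φ l + 1) - xstar‖) atTop (𝓝 0) := by
    have := tendsto_iff_norm_sub_tendsto_zero.mp hx1
    simpa using this
  have hw0 : Tendsto (fun l => ⟪y (φ l) - g₂' (x (φ l)), x (φ l + 1) - xstar⟫) atTop (𝓝 0) := by
    rw [tendsto_zero_iff_abs_tendsto_zero]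
    apply squeeze_zero' (Eventually.of_forall fun l => abs_nonneg _)
      (g := fun l => K * ‖x (φ l + 1) - xstar‖)
    · filter_upwards [hwb] with l hl
      calc |⟪y (φ l) - g₂' (x (φ l)), x (φ l + 1) - xstar⟫|
          ≤ ‖y (φ l) - g₂' (x (φ l))‖ * ‖x (φ l + 1) - xstar‖ := abs_real_inner_le_norm _ _
        _ ≤ K * ‖x (φ l + 1) - xstar‖ := by
            apply mul_le_mul_of_nonneg_right hl (norm_nonneg _)
    · simpa using hdist1.const_mul K
  -- upper bound
  have hupper : m + h xstar - g₂ xstar ≤ astar := by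
    have hineq : ∀ l, a (φ l + 1) ≤ astar + ⟪y (φ l) - g₂' (x (φ l)), x (φ l + 1) - xstar⟫
        + t/2 * (‖xstar - x (φ l)‖^2 - ‖x (φ l + 1) - x (φ l)‖^2) := by
      intro l
      have hm := hminR (φ l) xstar astar hstarcoe
      have hid : ⟪y (φ l) - g₂' (x (φ l)), x (φ l + 1) - x (φ l)⟫
          - ⟪y (φ l) - g₂' (x (φ l)), xstar - x (φ l)⟫
          = ⟪y (φ l) - g₂' (x (φ l)), x (φ l + 1) - xstar⟫ := by
        rw [← inner_sub_right]
        congr 1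
        abel
      linarith
    have hrhs : Tendsto (fun l => astar + ⟪y (φ l) - g₂' (x (φ l)), x (φ l + 1) - xstar⟫
        + t/2 * (‖xstar - x (φ l)‖^2 - ‖x (φ l + 1) - x (φ l)‖^2)) atTop (𝓝 astar) := by
      have hn1 : Tendsto (fun l => ‖xstar - x (φ l)‖^2) atTop (𝓝 0) := by
        have h0 : Tendsto (fun l => ‖xstar - x (φ l)‖) atTop (𝓝 0) := by
          have := tendsto_iff_norm_sub_tendsto_zero.mp hxφ
          simp only [norm_sub_rev] at this ⊢
          simpa using this
        have := h0.mul h0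
        simpa [pow_two] using this
      have hn2 : Tendsto (fun l => ‖x (φ l + 1) - x (φ l)‖^2) atTop (𝓝 0) := by
        have := hsq.comp hφt
        simpa [Function.comp_def] using this
      have := (tendsto_const_nhds (x := astar)).add hw0 |>.add
        (((hn1.sub hn2)).const_mul (t/2))
      simpa using this
    exact le_of_tendsto_of_tendsto' halψ hrhs hineq
  have hmeq : m = astar + g₂ xstar - h xstar := by linarith
  -- conclude
  have hfxstar : f xstar = ((m : ℝ) : EReal) := by
    rw [hf, hstarcoe, ← EReal.coe_add, ← EReal.coe_sub, hmeq]
  rw [hfxstar]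
  simp only [hfr]
  exact (continuous_coe_real_ereal.tendsto m).comp hrm

/-- If `inf f > −∞` and the GPPA sequence has a cluster point `x*`, then
`f(x^k) → f(x*)`; consequently `f` has the same value at all cluster points. -/
theorem stmt_5 {n : ℕ}
    (g₁ : EuclideanSpace ℝ (Fin n) → EReal)
    (g₂ h : EuclideanSpace ℝ (Fin n) → ℝ)
    (g₂' : EuclideanSpace ℝ (Fin n) → EuclideanSpace ℝ (Fin n))
    (L t : ℝ) (hL : 0 ≤ L) (ht : L < t)
    (hproper : ∃ z, g₁ z ≠ ⊤) (hnotbot : ∀ z, g₁ z ≠ ⊥)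
    (hlsc : LowerSemicontinuous g₁)
    (hgrad : ∀ z, HasGradientAt g₂ (g₂' z) z)
    (hlip : LipschitzWith L.toNNReal g₂')
    (hconv : ConvexOn ℝ Set.univ h)
    (f : EuclideanSpace ℝ (Fin n) → EReal)
    (hf : ∀ z, f z = g₁ z + ((g₂ z : ℝ) : EReal) - ((h z : ℝ) : EReal))
    (hbdd : (⨅ z, f z) ≠ ⊥)
    (x y : ℕ → EuclideanSpace ℝ (Fin n))
    (hdom : ∀ k, g₁ (x k) ≠ ⊤)
    (hy : ∀ k z, ⟪y k, z - x k⟫ ≤ h z - h (x k))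
    (hmin : ∀ k z,
      g₁ (x (k+1)) - ((⟪y k - g₂' (x k), x (k+1) - x k⟫ : ℝ) : EReal)
        + ((t/2 * ‖x (k+1) - x k‖^2 : ℝ) : EReal)
      ≤ g₁ z - ((⟪y k - g₂' (x k), z - x k⟫ : ℝ) : EReal)
        + ((t/2 * ‖z - x k‖^2 : ℝ) : EReal))
    (xstar : EuclideanSpace ℝ (Fin n))
    (hcluster : ∃ φ : ℕ → ℕ, StrictMono φ ∧ Tendsto (fun l => x (φ l)) atTop (𝓝 xstar)) :
    Tendsto (fun k => f (x k)) atTop (𝓝 (f xstar)) ∧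
    (∀ x₁ x₂ : EuclideanSpace ℝ (Fin n),
      (∃ φ : ℕ → ℕ, StrictMono φ ∧ Tendsto (fun l => x (φ l)) atTop (𝓝 x₁)) →
      (∃ ψ : ℕ → ℕ, StrictMono ψ ∧ Tendsto (fun l => x (ψ l)) atTop (𝓝 x₂)) →
      f x₁ = f x₂) := by
  constructor
  · exact gppa_tendsto g₁ g₂ h g₂' L t hL ht hnotbot hlsc hgrad hlip hconv f hf hbdd x y
      hdom hy hmin xstar hcluster
  · intro x₁ x₂ h₁ h₂
    exact tendsto_nhds_unique
      (gppa_tendsto g₁ g₂ h g₂' L t hL ht hnotbot hlsc hgrad hlip hconv f hf hbdd x y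
        hdom hy hmin x₁ h₁)
      (gppa_tendsto g₁ g₂ h g₂' L t hL ht hnotbot hlsc hgrad hlip hconv f hf hbdd x y
        hdom hy hmin x₂ h₂)
end
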